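/- Suppose γ > 0 is such that μ(B) ≤ e^{−γℓ}. Then there is a constant C depending only on d such that Σ_{x≠0} Σ_{y∼x} μ_0[ c_{xy}(η) (f(η^{xy}) − f(η))² ] ≤ C ℓ^{d+2} e^{−γℓ}. -/

import Mathlib

open MeasureTheory ENNReal

noncomputable section

namespace KA

open scoped Classical

/-- Sites of the lattice `ℤ^d`. -/
abbrev Site (d : ℕ) := Fin d → ℤ

/-- A configuration: `true` = occupied, `false` = empty. -/
abbrev Config (d : ℕ) := Site d → Bool

variable {d : ℕ}

def origin : Site d := fun _ => 0

def eVec (d : ℕ) (i : Fin d) : Site d := fun j => if j = i then 1 else 0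

/-- Nearest neighbours in `ℤ^d`. -/
def adj (x y : Site d) : Prop := (∑ i, |x i - y i|) = 1

/-- The set of (at most `2d`) nearest neighbours of a site. -/
def neighbors (x : Site d) : Finset (Site d) :=
  Finset.image (fun p : Fin d × Bool =>
    Function.update x p.1 (x p.1 + if p.2 then 1 else -1)) Finset.univ

/-- The Kob-Andersen kinetic constraint `c_{xy}` for parameter `k`:
`x` has at least `k-1` empty neighbours other than `y`, and vice versa. -/
def constraint (k : ℕ) (η : Config d) (x y : Site d) : Prop :=
  k - 1 ≤ ((neighbors x).filter fun z => z ≠ y ∧ η z = false).card ∧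
  k - 1 ≤ ((neighbors y).filter fun z => z ≠ x ∧ η z = false).card

/-- `c_{xy}(η)` as a `{0,1}`-valued quantity. -/
def cval (k : ℕ) (η : Config d) (x y : Site d) : ℝ≥0∞ :=
  if constraint k η x y then 1 else 0

/-- `η^{xy}` : the configuration with the values at `x` and `y` exchanged. -/
def swap (η : Config d) (x y : Site d) : Config d :=
  fun z => if z = x then η y else if z = y then η x else η z

/-- `(τ_y η)(z) = η (z - y)`. -/
def shift (y : Site d) (η : Config d) : Config d := fun z => η (z - y)

/-- A local function depends on finitely many coordinates. -/
def IsLocal (f : Config d → ℝ) : Prop :=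
  ∃ S : Finset (Site d), ∀ η η' : Config d, (∀ x ∈ S, η x = η' x) → f η = f η'

def dotZ (u : Fin d → ℝ) (y : Site d) : ℝ := ∑ i, u i * (y i : ℝ)

/-- The environment part `Σ_{x ≠ 0} Σ_{y ∼ x} c_{xy} (f(η^{xy}) - f(η))²`. -/
def envTerm (k : ℕ) (f : Config d → ℝ) (η : Config d) : ℝ≥0∞ :=
  ∑' p : Site d × Site d,
    if p.1 ≠ origin ∧ adj p.1 p.2 then
      cval k η p.1 p.2 * ENNReal.ofReal ((f (swap η p.1 p.2) - f η) ^ 2)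
    else 0

/-- The tagged-particle part `Σ_{y ∼ 0} c_{0y} (u·y + f(τ_y η^{0y}) - f(η))²`. -/
def tagTerm (k : ℕ) (u : Fin d → ℝ) (f : Config d → ℝ) (η : Config d) : ℝ≥0∞ :=
  ∑' y : Site d,
    if adj origin y then
      cval k η origin y *
        ENNReal.ofReal ((dotZ u y + f (shift y (swap η origin y)) - f η) ^ 2)
    else 0

/-- The variational (Dirichlet) functional `E_u(f)` integrated against `μ₀`. -/
def energy (k : ℕ) (u : Fin d → ℝ) (μ0 : Measure (Config d)) (f : Config d → ℝ) : ℝ≥0∞ :=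
  ∫⁻ η, envTerm k f η + tagTerm k u f η ∂μ0

/-- `μ` is the Bernoulli product measure where each site is independently
occupied with probability `1 - q`. -/
def IsBernoulliProduct (q : ℝ) (μ : Measure (Config d)) : Prop :=
  IsProbabilityMeasure μ ∧
  ∀ (S : Finset (Site d)) (ζ : Site d → Bool),
    μ {η | ∀ x ∈ S, η x = ζ x} = ∏ x ∈ S, ENNReal.ofReal (if ζ x then 1 - q else q)

/-- `μ₀ = μ(· | η(0) = 1)`. -/
def condOcc (μ : Measure (Config d)) : Measure (Config d) :=
  ProbabilityTheory.cond μ {η | η origin = true}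

/-- The first standard basis vector of `ℝ^d`. -/
def e1R (d : ℕ) : Fin d → ℝ := fun i => if (i : ℕ) = 0 then 1 else 0

def basisR (d : ℕ) (i : Fin d) : Fin d → ℝ := fun j => if j = i then 1 else 0

/-- The quadratic form `u ↦ inf over local f of E_u(f)`. -/
def Qform (k : ℕ) (μ : Measure (Config d)) (u : Fin d → ℝ) : ℝ≥0∞ :=
  ⨅ f : {f : Config d → ℝ // IsLocal f}, energy k u (condOcc μ) f.1

/-- The self-diffusion coefficient `D(q) = inf_f E_{e₁}(f)`. -/
def diffCoeff (k : ℕ) (μ : Measure (Config d)) : ℝ≥0∞ := Qform k μ (e1R d)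

/-- `expIter n` is the `n`-fold iterated exponential. -/
def expIter : ℕ → ℝ → ℝ
  | 0, x => x
  | n + 1, x => Real.exp (expIter n x)

/-! ### Frameability, goodness, block-connectedness -/

/-- Fill every site outside `V` with a particle. -/
def fillOutside (V : Set (Site d)) (η : Config d) : Config d :=
  fun z => if z ∈ V then η z else true

/-- A single legal KA-`k`f transition inside `V`. -/
def KAStep (k : ℕ) (V : Set (Site d)) (η η' : Config d) : Prop :=
  ∃ x y, adj x y ∧ x ∈ V ∧ y ∈ V ∧ η x ≠ η y ∧ constraint k η x y ∧ η' = swap η x y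

/-- A generalized box with minimal corner `a`, spanning the directions in `E`,
with side length `m` (coordinates outside `E` are frozen at `a`). -/
def genBox (a : Site d) (E : Finset (Fin d)) (m : ℕ) : Set (Site d) :=
  {x | ∀ i, (i ∈ E → a i ≤ x i ∧ x i < a i + m) ∧ (i ∉ E → x i = a i)}

/-- The `k'`-th frame of the generalized box: the union of all of its
`(k'-1)`-dimensional slices passing through the minimal corner. -/
def genFrame (k' : ℕ) (a : Site d) (E : Finset (Fin d)) (m : ℕ) : Set (Site d) :=
  {x | x ∈ genBox a E m ∧ (E.filter fun i => x i ≠ a i).card ≤ k' - 1}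

/-- The generalized box is frameable for `η` : `η` (with the outside filled by
particles) is connected by legal KA-`k'`f transitions inside the box to a
configuration whose `k'`-th frame is empty. -/
def Frameable (k' : ℕ) (a : Site d) (E : Finset (Fin d)) (m : ℕ) (η : Config d) : Prop :=
  ∃ η', Relation.ReflTransGen (KAStep k' (genBox a E m)) (fillOutside (genBox a E m) η) η' ∧
    ∀ x ∈ genFrame k' a E m, η' x = false

def one (d : ℕ) : Site d := fun _ => 1

/-- minimal corner of the box `b + [m]^d`. -/
def corner (b : Site d) : Site d := fun i => b i + 1

/-- All codimension-one slices of the generalized box are `(k'-1)`-frameable,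
for every configuration differing from `η` in at most one site. -/
def SlicesOK (k' : ℕ) (a : Site d) (E : Finset (Fin d)) (m : ℕ) (η : Config d) : Prop :=
  ∀ η' : Config d, {x | η' x ≠ η x}.Subsingleton →
    ∀ i ∈ E, ∀ t : ℕ, t < m →
      Frameable (k' - 1) (Function.update a i (a i + t)) (E.erase i) m η'

/-- A good box: all codimension-one slices frameable (robustly to one spin flip),
with one extra empty site in addition to the ones required. -/
def GoodBox (k' : ℕ) (a : Site d) (E : Finset (Fin d)) (m : ℕ) (η : Config d) : Prop :=
  SlicesOK k' a E m η ∧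
  ∃ x₀ ∈ genBox a E m, η x₀ = false ∧ SlicesOK k' a E m (Function.update η x₀ true)

/-- The length scale `ℓ = ℓ(q)`. -/
def lscale (d k : ℕ) (c q : ℝ) : ℕ :=
  if k = 2 then ⌈c * Real.log (1 / q) * q ^ (-(1 : ℝ) / ((d : ℝ) - 1))⌉₊
  else ⌈c * expIter (k - 2) (q ^ (-(1 : ℝ) / ((d : ℝ) - (k : ℝ) + 1)))⌉₊

/-- The length scale `L = q^{-cℓ}`. -/
def Lscale (q c : ℝ) (ℓ : ℕ) : ℕ := ⌈q ^ (-(c * (ℓ : ℝ)))⌉₊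

/-- One step between adjacent boxes: the base point moves by `±ℓ e_i`. -/
def pathStep (ℓ : ℕ) (b b' : Site d) : Prop :=
  ∃ i : Fin d, ∃ s : Bool,
    b' = fun j => b j + if j = i then (if s then (ℓ : ℤ) else -(ℓ : ℤ)) else 0

/-- A `(d,k)`-super-good path of boxes of side `ℓ` inside the block `v + [L]^d`,
joining `v + [ℓ]^d` to `v + (L-ℓ)e_α + [ℓ]^d`, of length at most `3L`:
all boxes good and at least one frameable. -/
def SuperGoodPath (k ℓ L : ℕ) (v : Site d) (α : Fin d) (η : Config d) : Prop :=
  ∃ n : ℕ, n ≤ 3 * L ∧ ∃ b : ℕ → Site d,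
    b 0 = v ∧
    (b n = fun j => v j + if j = α then (L : ℤ) - (ℓ : ℤ) else 0) ∧
    (∀ m < n, pathStep ℓ (b m) (b (m + 1))) ∧
    (∀ m ≤ n, genBox (corner (b m)) Finset.univ ℓ ⊆ genBox (corner v) Finset.univ L) ∧
    (∀ m ≤ n, GoodBox k (corner (b m)) Finset.univ ℓ η) ∧
    (∃ m ≤ n, Frameable k (corner (b m)) Finset.univ ℓ η)

/-- minimal corner of the external face of the box `genBox a univ m` in
direction `j`, on the positive (`s = true`) or negative side. -/
def faceBase (a : Site d) (m : ℕ) (j : Fin d) (s : Bool) : Site d :=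
  Function.update a j (if s then a j + m else a j - 1)

/-- The face `F` is adjacent to the vertex `v`. -/
def FaceNear (v : Site d) (F : Set (Site d)) : Prop := ∃ x ∈ F, ∀ i, |x i - v i| ≤ 1

/-- All `(d-1)`-dimensional external faces of the box `genBox a univ m` that are
adjacent to the vertex `v` are `(d-1, k-1)`-good. -/
def GoodFacesAt (k : ℕ) (a : Site d) (m : ℕ) (v : Site d) (η : Config d) : Prop :=
  ∀ (j : Fin d) (s : Bool),
    FaceNear v (genBox (faceBase a m j s) (Finset.univ.erase j) m) →
    GoodBox (k - 1) (faceBase a m j s) (Finset.univ.erase j) m η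

/-- The coarse vertices `v` and `v + (L+1)e_α` are `(d,k)`-block-connected. -/
def BlockConnected (k ℓ L : ℕ) (v : Site d) (α : Fin d) (η : Config d) : Prop :=
  SuperGoodPath k ℓ L v α η ∧
  GoodFacesAt k (corner v) ℓ v η ∧
  GoodFacesAt k (corner (fun j => v j + if j = α then (L : ℤ) - (ℓ : ℤ) else 0)) (ℓ + 1)
    (fun j => v j + if j = α then (L : ℤ) + 1 else 0) η

/-! ### `T`-step moves -/

/-- A `T`-step move with domain determined by the set of configurations `M`,
whose transitions are legal KA-`k`f transitions contained in `V`,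
keeping track of the position of a marked particle. -/
structure TStepMove (d k : ℕ) (M : Set (Config d)) (V : Set (Site d)) (T : ℕ) where
  conf : Config d → ℕ → Config d
  pos : Config d → Site d → ℕ → Site d
  conf_zero : ∀ η ∈ M, conf η 0 = η
  pos_zero : ∀ η ∈ M, ∀ z : Site d, η z = true → pos η z 0 = z
  step : ∀ η ∈ M, ∀ z : Site d, η z = true → ∀ t < T,
    (conf η (t + 1) = conf η t ∧ pos η z (t + 1) = pos η z t) ∨
    ∃ x y, adj x y ∧ x ∈ V ∧ y ∈ V ∧ conf η t x = true ∧ conf η t y = false ∧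
      constraint k (conf η t) x y ∧ conf η (t + 1) = swap (conf η t) x y ∧
      pos η z (t + 1) = if pos η z t = x then y else pos η z t

/-- `Loss(M) ≤ K` : at every step, at most `2^K` configurations of the domain
have a common image. -/
def LossBoundedBy {d k : ℕ} {M : Set (Config d)} {V : Set (Site d)} {T : ℕ}
    (mv : TStepMove d k M V T) (K : ℝ) : Prop :=
  ∀ t < T, ∀ η' ∈ M, ∃ S : Finset (Config d),
    {η ∈ M | mv.conf η t = mv.conf η' t ∧ mv.conf η (t + 1) = mv.conf η' (t + 1)} ⊆ ↑S ∧
    (S.card : ℝ) ≤ (2 : ℝ) ^ K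

/-! ### Bond configurations on the coarse lattice -/

/-- A bond configuration on the coarse lattice: the edge `(i, α)` joins the
coarse vertices of index `i` and `i + e_α`. -/
abbrev BondConfig (d : ℕ) := (Site d × Fin d) → Bool

def IsLocalBond (g : BondConfig d → ℝ) : Prop :=
  ∃ S : Finset (Site d × Fin d), ∀ ω ω' : BondConfig d, (∀ e ∈ S, ω e = ω' e) → g ω = g ω'

/-- Translation of a bond configuration by a coarse index vector. -/
def bondShift (v : Site d) (ω : BondConfig d) : BondConfig d := fun e => (ω (e.1 - v, e.2))

/-- Two coarse indices joined by an open bond. -/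
def bondRel (ω : BondConfig d) (i j : Site d) : Prop :=
  (∃ α, j = i + eVec d α ∧ ω (i, α) = true) ∨ (∃ α, i = j + eVec d α ∧ ω (j, α) = true)

/-- The event `{0 ↔ ∞}`: the origin lies in an infinite open cluster. -/
def InfiniteCluster : Set (BondConfig d) :=
  {ω | {j : Site d | Relation.ReflTransGen (bondRel ω) origin j}.Infinite}

/-- The coarse index of the neighbour `± e_α` of the coarse origin. -/
def coarseIdx (d : ℕ) (α : Fin d) (s : Bool) : Site d :=
  if s then eVec d α else -(eVec d α)

/-- The actual lattice vector `±(L+1) e_α` of a coarse neighbour of the origin. -/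
def coarseVecZ (d L : ℕ) (α : Fin d) (s : Bool) : Site d :=
  fun j => ((L : ℤ) + 1) * coarseIdx d α s j

/-- Indicator of the bond between the coarse origin and its neighbour `± e_α`. -/
def edgeInd (ω : BondConfig d) (α : Fin d) (s : Bool) : ℝ≥0∞ :=
  if (if s then ω (origin, α) else ω (-(eVec d α), α)) = true then 1 else 0

/-- The auxiliary quadratic form `u ↦ u ⬝ D_aux u`. -/
def QauxForm (d L : ℕ) (μstar : Measure (BondConfig d)) (u : Fin d → ℝ) : ℝ≥0∞ :=
  ⨅ g : {g : BondConfig d → ℝ // IsLocalBond g},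
    ∑ α : Fin d, ∑ s : Bool,
      ∫⁻ ω, edgeInd ω α s *
        ENNReal.ofReal (((if s then (1 : ℝ) else -1) * ((L : ℝ) + 1) * u α +
          g.1 (bondShift (coarseIdx d α s) ω) - g.1 ω) ^ 2) ∂μstar

/-- Indicator (on microscopic configurations) that the coarse origin and its
neighbour `± e_α` are block-connected, for an abstract notion `BC`. -/
def microEdgeInd (BC : Site d → Fin d → Config d → Bool) (α : Fin d) (s : Bool)
    (η : Config d) : ℝ≥0∞ :=
  if (if s then BC origin α η else BC (-(eVec d α)) α η) = true then 1 else 0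

/-- The microscopic comparison form
`u ↦ inf_f Σ_{i ∼ 0} μ₀[ η̄_{0i} (u·i + f(τ_i η^{0,i}) - f(η))² ]`. -/
def microForm (d k L : ℕ) (BC : Site d → Fin d → Config d → Bool)
    (μ0 : Measure (Config d)) (u : Fin d → ℝ) : ℝ≥0∞ :=
  ⨅ f : {f : Config d → ℝ // IsLocal f},
    ∑ α : Fin d, ∑ s : Bool,
      ∫⁻ η, microEdgeInd BC α s η *
        ENNReal.ofReal (((if s then (1 : ℝ) else -1) * ((L : ℝ) + 1) * u α +
          f.1 (shift (coarseVecZ d L α s) (swap η origin (coarseVecZ d L α s))) - f.1 η) ^ 2)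
        ∂μ0

/-! ### d = 2 geometry -/

/-- The column `y + {c} × [ℓ]` in `ℤ²`. -/
def col2 (y : Site 2) (c : ℤ) (ℓ : ℕ) : Set (Site 2) :=
  {x | x 0 = y 0 + c ∧ y 1 + 1 ≤ x 1 ∧ x 1 ≤ y 1 + ℓ}

/-- The box `b + [ℓ]²`. -/
def box2 (b : Site 2) (ℓ : ℕ) : Set (Site 2) := genBox (corner b) Finset.univ ℓ

/-- `S` contains at least two empty sites. -/
def TwoEmptyIn (S : Set (Site 2)) (η : Config 2) : Prop :=
  ∃ a ∈ S, ∃ b ∈ S, a ≠ b ∧ η a = false ∧ η b = false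

/-- Every row and every column of the box `b + [ℓ]²` contains at least two
empty sites. -/
def RowsColsOK (b : Site 2) (ℓ : ℕ) (η : Config 2) : Prop :=
  (∀ t : ℕ, 1 ≤ t → t ≤ ℓ → TwoEmptyIn {z | z ∈ box2 b ℓ ∧ z 1 = b 1 + t} η) ∧
  (∀ t : ℕ, 1 ≤ t → t ≤ ℓ → TwoEmptyIn {z | z ∈ box2 b ℓ ∧ z 0 = b 0 + t} η)

/-- The box `b + [ℓ]²` is `(2,2)`-good: two empty sites in every row and
column, plus one additional empty site. -/
def Good22 (b : Site 2) (ℓ : ℕ) (η : Config 2) : Prop :=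
  RowsColsOK b ℓ η ∧
  ∃ w ∈ box2 b ℓ, η w = false ∧ RowsColsOK b ℓ (Function.update η w true)

/-! ### Bootstrap percolation -/

/-- The box `[-ℓ, ℓ]^d`. -/
def bigBox (d ℓ : ℕ) : Set (Site d) := {x | ∀ i, |x i| ≤ (ℓ : ℤ)}

/-- One step of `k`-neighbour bootstrap percolation on `[-ℓ,ℓ]^d` (sites
outside the box are left unchanged). -/
def BPstep (k ℓ : ℕ) (η : Config d) : Config d := fun x =>
  if x ∈ bigBox d ℓ then
    (if η x = true ∧
        ((neighbors x).filter fun z => z ∈ bigBox d ℓ ∧ η z = false).card < k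
      then true else false)
  else η x

/-- The limiting configuration of bootstrap percolation. -/
def BPinf (k ℓ : ℕ) (η : Config d) : Config d := fun x =>
  if ∀ t : ℕ, (BPstep k ℓ)^[t] η x = true then true else false

/-- One step along the bootstrap percolation cluster. -/
def bpRel (k ℓ : ℕ) (η : Config d) (a b : Site d) : Prop :=
  adj a b ∧ b ∈ bigBox d ℓ ∧ BPinf k ℓ η b = false

/-- The bootstrap percolation cluster of the origin. -/
def bpCluster (k ℓ : ℕ) (η : Config d) : Set (Site d) :=
  {x | Relation.ReflTransGen (bpRel k ℓ η) origin x}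

def coord0 (x : Site d) : ℤ := if h : 0 < d then x ⟨0, h⟩ else 0

/-- The first coordinate of the rightmost site of the bootstrap percolation
cluster of the origin. -/
def bpRightmost (k ℓ : ℕ) (η : Config d) : ℝ :=
  sSup ((fun x : Site d => (coord0 x : ℝ)) '' bpCluster k ℓ η)

/-- The test function `f`, computed on the restriction to `[-ℓ,ℓ]^d`. -/
def fTest (d k ℓ : ℕ) (η : Config d) : ℝ :=
  bpRightmost k ℓ (fillOutside (bigBox d ℓ) η)

/-- The event `B` : the bootstrap percolation cluster of the origin contains a
site of `ℓ^∞`-norm at least `ℓ - 1`. -/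
def Bevent (k ℓ : ℕ) (η : Config d) : Prop :=
  ∃ x ∈ bpCluster k ℓ η, ∃ i, (ℓ : ℤ) - 1 ≤ |x i|

section AuxBasic

variable {d : ℕ}

lemma ne_of_adj {x y : Site d} (h : adj x y) : x ≠ y := by
  intro he; subst he; simp [adj] at h

lemma adj_symm {x y : Site d} (h : adj x y) : adj y x := by
  unfold adj at h ⊢
  rw [Finset.sum_congr rfl (fun i _ => abs_sub_comm (y i) (x i))]
  exact h

lemma abs_sub_le_of_adj {x y : Site d} (h : adj x y) (i : Fin d) : |x i - y i| ≤ 1 := by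
  calc |x i - y i| ≤ ∑ j, |x j - y j| :=
        Finset.single_le_sum (f := fun j => |x j - y j|) (fun j _ => abs_nonneg _) (Finset.mem_univ i)
    _ = 1 := h

lemma mem_neighbors_of_adj {x y : Site d} (h : adj x y) : y ∈ neighbors x := by
  have hex : ∃ i, x i ≠ y i := by
    by_contra hc
    push_neg at hc
    have : x = y := funext hc
    exact ne_of_adj h this
  obtain ⟨i, hi⟩ := hex
  have h1 : (1 : ℤ) ≤ |x i - y i| := Int.one_le_abs (sub_ne_zero.mpr hi)
  have h2 : |x i - y i| = 1 := le_antisymm (abs_sub_le_of_adj h i) h1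
  have hrest : ∀ j, j ≠ i → x j = y j := by
    intro j hj
    have hsum : |x i - y i| + ∑ l ∈ Finset.univ.erase i, |x l - y l| = 1 := by
      rw [Finset.add_sum_erase _ (fun l => |x l - y l|) (Finset.mem_univ i)]; exact h
    have hz : ∑ l ∈ Finset.univ.erase i, |x l - y l| = 0 := by omega
    have := (Finset.sum_eq_zero_iff_of_nonneg (fun l _ => abs_nonneg _)).mp hz j
      (Finset.mem_erase.mpr ⟨hj, Finset.mem_univ j⟩)
    have : x j - y j = 0 := abs_eq_zero.mp this
    omega
  have hcase : y i = x i + 1 ∨ y i = x i + (-1) := by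
    rcases abs_eq (by norm_num : (0:ℤ) ≤ 1) |>.mp h2 with hc | hc
    · right; omega
    · left; omega
  rcases hcase with hc | hc
  · refine Finset.mem_image.mpr ⟨(i, true), Finset.mem_univ _, ?_⟩
    funext j
    by_cases hj : j = i
    · subst hj; simp [Function.update_self, hc]
    · simp [Function.update_of_ne hj, hrest j hj]
  · refine Finset.mem_image.mpr ⟨(i, false), Finset.mem_univ _, ?_⟩
    funext j
    by_cases hj : j = i
    · subst hj; simp [Function.update_self, hc]
    · simp [Function.update_of_ne hj, hrest j hj]

lemma adj_of_mem_neighbors {x z : Site d} (h : z ∈ neighbors x) : adj x z := by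
  obtain ⟨⟨i, b⟩, -, rfl⟩ := Finset.mem_image.mp h
  unfold adj
  rw [Finset.sum_eq_single i]
  · cases b <;> simp [Function.update_self]
  · intro j _ hj
    simp [Function.update_of_ne (Ne.symm (by exact fun hh => hj hh.symm) : j ≠ i)]
  · intro hi; exact absurd (Finset.mem_univ i) hi

lemma card_neighbors_le (x : Site d) : (neighbors x).card ≤ 2 * d := by
  calc (neighbors x).card ≤ (Finset.univ : Finset (Fin d × Bool)).card :=
        Finset.card_image_le
    _ = 2 * d := by simp [Finset.card_univ, mul_comm]

end AuxBasic

section AuxBP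

variable {d : ℕ}

/-- Pointwise order on configurations: `η` has fewer particles than `η'`. -/
def cle (η η' : Config d) : Prop := ∀ z, η z = true → η' z = true

lemma cle_refl (η : Config d) : cle η η := fun _ h => h

lemma bpstep_le (k ℓ : ℕ) (η : Config d) : cle (BPstep k ℓ η) η := by
  intro z h
  unfold BPstep at h
  by_cases hb : z ∈ bigBox d ℓ
  · rw [if_pos hb] at h
    split_ifs at h with hc
    · exact hc.1
  · rwa [if_neg hb] at h

lemma bpstep_mono {k ℓ : ℕ} {η η' : Config d} (h : cle η η') :
    cle (BPstep k ℓ η) (BPstep k ℓ η') := by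
  intro z hz
  unfold BPstep at hz ⊢
  by_cases hb : z ∈ bigBox d ℓ
  · rw [if_pos hb] at hz ⊢
    split_ifs at hz with hc
    · rw [if_pos]
      refine ⟨h z hc.1, lt_of_le_of_lt (Finset.card_le_card ?_) hc.2⟩
      intro w hw
      rw [Finset.mem_filter] at hw ⊢
      refine ⟨hw.1, hw.2.1, ?_⟩
      cases hww : η w
      · rfl
      · exact absurd (h w hww) (by simp [hw.2.2])
  · rw [if_neg hb] at hz ⊢
    exact h z hz

lemma iter_mono {k ℓ : ℕ} (t : ℕ) {η η' : Config d} (h : cle η η') :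
    cle ((BPstep k ℓ)^[t] η) ((BPstep k ℓ)^[t] η') := by
  induction t with
  | zero => simpa using h
  | succ t ih =>
      rw [Function.iterate_succ_apply', Function.iterate_succ_apply']
      exact bpstep_mono ih

lemma iter_le_iter {k ℓ : ℕ} {s t : ℕ} (hst : s ≤ t) (η : Config d) :
    cle ((BPstep k ℓ)^[t] η) ((BPstep k ℓ)^[s] η) := by
  induction t with
  | zero => have : s = 0 := Nat.le_zero.mp hst; subst this; exact cle_refl _
  | succ t ih =>
      rcases Nat.lt_or_ge s (t+1) with hlt | hge
      · have h1 : cle ((BPstep k ℓ)^[t+1] η) ((BPstep k ℓ)^[t] η) := by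
          rw [Function.iterate_succ_apply']
          exact bpstep_le k ℓ _
        exact fun z hz => ih (Nat.lt_succ_iff.mp hlt) z (h1 z hz)
      · have : s = t + 1 := le_antisymm hst hge
        subst this; exact cle_refl _

lemma iter_le {k ℓ : ℕ} (t : ℕ) (η : Config d) : cle ((BPstep k ℓ)^[t] η) η :=
  iter_le_iter (Nat.zero_le t) η

lemma BPinf_eq_false_iff {k ℓ : ℕ} {η : Config d} {z : Site d} :
    BPinf k ℓ η z = false ↔ ∃ t, (BPstep k ℓ)^[t] η z = false := by
  unfold BPinf
  split_ifs with h
  · constructor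
    · intro h'; simp at h'
    · rintro ⟨t, ht⟩; rw [h t] at ht; cases ht
  · push_neg at h
    obtain ⟨t, ht⟩ := h
    simp only [ne_eq, Bool.not_eq_true] at ht
    constructor
    · intro _; exact ⟨t, ht⟩
    · intro _; rfl

lemma BPinf_eq_true_iff {k ℓ : ℕ} {η : Config d} {z : Site d} :
    BPinf k ℓ η z = true ↔ ∀ t, (BPstep k ℓ)^[t] η z = true := by
  unfold BPinf
  split_ifs with h
  · simp [h]
  · simp [h]

lemma bpinf_le (k ℓ : ℕ) (η : Config d) : cle (BPinf k ℓ η) η := by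
  intro z h
  have := BPinf_eq_true_iff.mp h 0
  simpa using this

lemma bpinf_mono {k ℓ : ℕ} {η η' : Config d} (h : cle η η') :
    cle (BPinf k ℓ η) (BPinf k ℓ η') := by
  intro z hz
  rw [BPinf_eq_true_iff] at hz ⊢
  exact fun t => iter_mono t h z (hz t)

lemma iter_false_mono {k ℓ : ℕ} {s t : ℕ} (hst : s ≤ t) {η : Config d} {z : Site d}
    (h : (BPstep k ℓ)^[s] η z = false) : (BPstep k ℓ)^[t] η z = false := by
  cases hv : (BPstep k ℓ)^[t] η z
  · rfl
  · have := iter_le_iter (k := k) (ℓ := ℓ) hst η z hv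
    rw [h] at this; cases this

lemma bool_eq_of_false_iff {a b : Bool} (h : a = false ↔ b = false) : a = b := by
  cases a <;> cases b <;> simp_all

lemma bpinf_iterate {k ℓ : ℕ} (T : ℕ) (η : Config d) :
    BPinf k ℓ ((BPstep k ℓ)^[T] η) = BPinf k ℓ η := by
  funext z
  apply bool_eq_of_false_iff
  rw [BPinf_eq_false_iff, BPinf_eq_false_iff]
  constructor
  · rintro ⟨t, ht⟩
    refine ⟨t + T, ?_⟩
    rw [congrFun (Function.iterate_add_apply (BPstep k ℓ) t T η) z]
    exact ht
  · rintro ⟨s, hs⟩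
    refine ⟨s, ?_⟩
    rw [← congrFun (Function.iterate_add_apply (BPstep k ℓ) s T η) z]
    exact iter_false_mono (Nat.le_add_right s T) hs

lemma bpinf_update_false {k ℓ : ℕ} {η : Config d} {x : Site d} {T : ℕ}
    (hT : (BPstep k ℓ)^[T] η x = false) :
    BPinf k ℓ (Function.update η x false) = BPinf k ℓ η := by
  have h1 : cle ((BPstep k ℓ)^[T] η) (Function.update η x false) := by
    intro z hz
    by_cases hzx : z = x
    · subst hzx; rw [hT] at hz; cases hz
    · rw [Function.update_of_ne hzx]
      exact iter_le T η z hz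
  have h2 : cle (Function.update η x false) η := by
    intro z hz
    by_cases hzx : z = x
    · subst hzx; rw [Function.update_self] at hz; cases hz
    · rwa [Function.update_of_ne hzx] at hz
  have h3 : cle (BPinf k ℓ η) (BPinf k ℓ (Function.update η x false)) := by
    have := bpinf_mono (k := k) (ℓ := ℓ) h1
    rwa [bpinf_iterate] at this
  have h4 := bpinf_mono (k := k) (ℓ := ℓ) h2
  funext z
  cases hv : BPinf k ℓ (Function.update η x false) z
  · cases hv2 : BPinf k ℓ η z
    · rfl
    · rw [h3 z hv2] at hv; cases hv
  · exact (h4 z hv).symm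

lemma iter_outside {k ℓ : ℕ} {z : Site d} (hz : z ∉ bigBox d ℓ) (η : Config d) (t : ℕ) :
    (BPstep k ℓ)^[t] η z = η z := by
  induction t with
  | zero => rfl
  | succ t ih =>
      rw [Function.iterate_succ_apply']
      unfold BPstep
      rw [if_neg hz]
      exact ih

end AuxBP

section AuxCluster

variable {d : ℕ}

lemma origin_mem_bigBox (ℓ : ℕ) : (origin : Site d) ∈ bigBox d ℓ := by
  intro i; simp [origin]

lemma cluster_subset_box {k ℓ : ℕ} {η : Config d} :
    bpCluster k ℓ η ⊆ bigBox d ℓ := by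
  intro z hz
  induction hz with
  | refl => exact origin_mem_bigBox ℓ
  | tail _ h2 _ => exact h2.2.1

lemma cluster_antitone {k ℓ : ℕ} {η η' : Config d} (h : cle η η') :
    bpCluster k ℓ η' ⊆ bpCluster k ℓ η := by
  intro z hz
  induction hz with
  | refl => exact Relation.ReflTransGen.refl
  | tail _ h2 ih =>
      refine Relation.ReflTransGen.tail ih ⟨h2.1, h2.2.1, ?_⟩
      cases hv : BPinf k ℓ η _
      · rfl
      · have := bpinf_mono (k := k) (ℓ := ℓ) h _ hv
        rw [h2.2.2] at this; cases this

lemma bevent_antitone {k ℓ : ℕ} {η η' : Config d} (h : cle η η')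
    (hB : Bevent k ℓ η') : Bevent k ℓ η := by
  obtain ⟨x, hx, i, hi⟩ := hB
  exact ⟨x, cluster_antitone h hx, i, hi⟩

lemma cluster_congr {k ℓ : ℕ} {η η' : Config d}
    (h : BPinf k ℓ η = BPinf k ℓ η') : bpCluster k ℓ η = bpCluster k ℓ η' := by
  unfold bpCluster bpRel
  rw [h]

lemma exists_uniform_time {k ℓ : ℕ} (ξ : Config d) (F : Finset (Site d))
    (h : ∀ w ∈ F, ∃ t, (BPstep k ℓ)^[t] ξ w = false) :
    ∃ T, ∀ w ∈ F, (BPstep k ℓ)^[T] ξ w = false := by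
  classical
  induction F using Finset.induction with
  | empty => exact ⟨0, by simp⟩
  | @insert a s ha ih =>
      obtain ⟨T1, hT1⟩ := ih (fun w hw => h w (Finset.mem_insert_of_mem hw))
      obtain ⟨t, ht⟩ := h a (Finset.mem_insert_self a s)
      refine ⟨max T1 t, ?_⟩
      intro w hw
      rcases Finset.mem_insert.mp hw with rfl | hw'
      · exact iter_false_mono (le_max_right T1 t) ht
      · exact iter_false_mono (le_max_left T1 t) (hT1 w hw')

lemma cascade {k ℓ : ℕ} (ξ ξ' : Config d) :
    ∀ n (z : Site d), (BPstep k ℓ)^[n] ξ' z = false → BPinf k ℓ ξ z = true →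
      ∃ w, ξ w ≠ ξ' w ∧ Relation.ReflTransGen (bpRel k ℓ ξ') z w := by
  intro n
  induction n with
  | zero =>
      intro z h0 hinf
      refine ⟨z, ?_, Relation.ReflTransGen.refl⟩
      have hz : ξ z = true := bpinf_le k ℓ ξ z hinf
      simp only [Function.iterate_zero_apply] at h0
      rw [hz, h0]; simp
  | succ n ih =>
      intro z hs hinf
      by_cases hn : (BPstep k ℓ)^[n] ξ' z = false
      · exact ih z hn hinf
      have hn' : (BPstep k ℓ)^[n] ξ' z = true := by
        cases hv : (BPstep k ℓ)^[n] ξ' z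
        · exact absurd hv hn
        · rfl
      rw [Function.iterate_succ_apply'] at hs
      unfold BPstep at hs
      by_cases hb : z ∈ bigBox d ℓ
      swap
      · rw [if_neg hb] at hs; exact absurd hs hn
      rw [if_pos hb] at hs
      split_ifs at hs with hcond
      have hcard : k ≤ ((neighbors z).filter
          (fun w => w ∈ bigBox d ℓ ∧ (BPstep k ℓ)^[n] ξ' w = false)).card := by
        by_contra hlt
        exact hcond ⟨hn', Nat.lt_of_not_le hlt⟩
      by_cases hall : ∀ w ∈ (neighbors z).filter
          (fun w => w ∈ bigBox d ℓ ∧ (BPstep k ℓ)^[n] ξ' w = false), BPinf k ℓ ξ w = false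
      · exfalso
        obtain ⟨T, hT⟩ := exists_uniform_time ξ ((neighbors z).filter
          (fun w => w ∈ bigBox d ℓ ∧ (BPstep k ℓ)^[n] ξ' w = false))
          (fun w hw => BPinf_eq_false_iff.mp (hall w hw))
        have hzfalse : (BPstep k ℓ)^[T + 1] ξ z = false := by
          rw [Function.iterate_succ_apply']
          unfold BPstep
          rw [if_pos hb, if_neg]
          rintro ⟨-, hlt⟩
          have hsub : (neighbors z).filter
              (fun w => w ∈ bigBox d ℓ ∧ (BPstep k ℓ)^[n] ξ' w = false) ⊆ (neighbors z).filter
              (fun w => w ∈ bigBox d ℓ ∧ (BPstep k ℓ)^[T] ξ w = false) := by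
            intro w hw
            have hw' := Finset.mem_filter.mp hw
            exact Finset.mem_filter.mpr ⟨hw'.1, hw'.2.1, hT w hw⟩
          have hle := Finset.card_le_card hsub
          exact absurd hlt (not_lt.mpr (hcard.trans hle))
        have := BPinf_eq_false_iff.mpr ⟨T + 1, hzfalse⟩
        rw [hinf] at this; cases this
      · push_neg at hall
        obtain ⟨w₀, hw₀F, hw₀⟩ := hall
        have hw₀true : BPinf k ℓ ξ w₀ = true := by
          cases hv : BPinf k ℓ ξ w₀
          · exact absurd hv hw₀
          · rfl
        have hw₀' := Finset.mem_filter.mp hw₀F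
        obtain ⟨w, hne, hpath⟩ := ih w₀ hw₀'.2.2 hw₀true
        refine ⟨w, hne, Relation.ReflTransGen.head ?_ hpath⟩
        exact ⟨adj_of_mem_neighbors hw₀'.1, hw₀'.2.1,
          BPinf_eq_false_iff.mpr ⟨n, hw₀'.2.2⟩⟩

lemma cluster_or {k ℓ : ℕ} {ξ ξ' : Config d} {z : Site d}
    (hz : z ∈ bpCluster k ℓ ξ') :
    z ∈ bpCluster k ℓ ξ ∨ ∃ w ∈ bpCluster k ℓ ξ', ξ w ≠ ξ' w := by
  induction hz with
  | refl => exact Or.inl Relation.ReflTransGen.refl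
  | @tail b c hb hbc ih =>
      rcases ih with hbξ | hwit
      · rcases hbc with ⟨hadj, hbox, hempty⟩
        by_cases he : BPinf k ℓ ξ c = false
        · exact Or.inl (hbξ.tail ⟨hadj, hbox, he⟩)
        · have htrue : BPinf k ℓ ξ c = true := by
            cases hv : BPinf k ℓ ξ c
            · exact absurd hv he
            · rfl
          obtain ⟨t, ht⟩ := BPinf_eq_false_iff.mp hempty
          obtain ⟨w, hne, hpath⟩ := cascade ξ ξ' t c ht htrue
          exact Or.inr ⟨w, (hb.tail ⟨hadj, hbox, hempty⟩).trans hpath, hne⟩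
      · exact Or.inr hwit

end AuxCluster

section AuxSwap

variable {d : ℕ}

lemma swap_self {η : Config d} {x y : Site d} (h : η x = η y) : swap η x y = η := by
  funext z
  unfold swap
  split_ifs with h1 h2
  · rw [h1, h]
  · rw [h2, h]
  · rfl

lemma swap_apply_ne {η : Config d} {x y z : Site d} (hx : z ≠ x) (hy : z ≠ y) :
    swap η x y z = η z := by
  unfold swap
  rw [if_neg hx, if_neg hy]

lemma swap_swap {η : Config d} {x y : Site d} (hxy : x ≠ y) :
    swap (swap η x y) x y = η := by
  funext z
  unfold swap
  by_cases h1 : z = x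
  · subst h1; rw [if_pos rfl, if_neg (Ne.symm hxy), if_pos rfl]
  · by_cases h2 : z = y
    · subst h2; rw [if_neg h1, if_pos rfl, if_pos rfl]
    · rw [if_neg h1, if_neg h2, if_neg h1, if_neg h2]

lemma fill_mem {V : Set (Site d)} {η : Config d} {z : Site d} (h : z ∈ V) :
    fillOutside V η z = η z := by
  unfold fillOutside; rw [if_pos h]

lemma fill_not_mem {V : Set (Site d)} {η : Config d} {z : Site d} (h : z ∉ V) :
    fillOutside V η z = true := by
  unfold fillOutside; rw [if_neg h]

lemma fill_swap_outside {ℓ : ℕ} {η : Config d} {x y : Site d}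
    (hx : x ∉ bigBox d ℓ) (hy : y ∉ bigBox d ℓ) :
    fillOutside (bigBox d ℓ) (swap η x y) = fillOutside (bigBox d ℓ) η := by
  funext z
  by_cases hz : z ∈ bigBox d ℓ
  · rw [fill_mem hz, fill_mem hz]
    exact swap_apply_ne (fun h => hx (h ▸ hz)) (fun h => hy (h ▸ hz))
  · rw [fill_not_mem hz, fill_not_mem hz]

lemma constraint_swap {k : ℕ} {η : Config d} {x y : Site d} (hxy : adj x y)
    (h : constraint k η x y) : constraint k (swap η x y) x y := by
  obtain ⟨h1, h2⟩ := h
  constructor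
  · refine le_trans h1 (le_of_eq (congrArg Finset.card ?_))
    apply Finset.filter_congr
    intro z hz
    have hzx : z ≠ x := (ne_of_adj (adj_of_mem_neighbors hz)).symm
    constructor
    · rintro ⟨hzy, hv⟩
      exact ⟨hzy, by rw [swap_apply_ne hzx hzy]; exact hv⟩
    · rintro ⟨hzy, hv⟩
      exact ⟨hzy, by rwa [swap_apply_ne hzx hzy] at hv⟩
  · refine le_trans h2 (le_of_eq (congrArg Finset.card ?_))
    apply Finset.filter_congr
    intro z hz
    have hzy : z ≠ y := (ne_of_adj (adj_of_mem_neighbors hz)).symm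
    constructor
    · rintro ⟨hzx, hv⟩
      exact ⟨hzx, by rw [swap_apply_ne hzx hzy]; exact hv⟩
    · rintro ⟨hzx, hv⟩
      exact ⟨hzx, by rwa [swap_apply_ne hzx hzy] at hv⟩

lemma deep_mem_box {ℓ : ℕ} {x : Site d} (h : ∀ i, |x i| ≤ (ℓ : ℤ) - 1) :
    x ∈ bigBox d ℓ := by
  intro i; have := h i; omega

lemma neighbor_mem_box_of_deep {ℓ : ℕ} {x z : Site d}
    (h : ∀ i, |x i| ≤ (ℓ : ℤ) - 1) (hz : adj x z) : z ∈ bigBox d ℓ := by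
  intro i
  have h1 := abs_sub_le_of_adj hz i
  have h2 := h i
  have h3 : |z i| - |x i| ≤ |z i - x i| := abs_sub_abs_le_abs_sub _ _
  rw [abs_sub_comm] at h3
  omega

lemma bpinf_swap_deep {k ℓ : ℕ} {η : Config d} {x y : Site d}
    (hk : 2 ≤ k) (hxy : adj x y)
    (hdx : ∀ i, |x i| ≤ (ℓ : ℤ) - 1) (hdy : ∀ i, |y i| ≤ (ℓ : ℤ) - 1)
    (hx : η x = true) (hy : η y = false) (hcon : constraint k η x y) :
    BPinf k ℓ (fillOutside (bigBox d ℓ) (swap η x y)) =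
      BPinf k ℓ (fillOutside (bigBox d ℓ) η) := by
  have hxyne : x ≠ y := ne_of_adj hxy
  have hxbox : x ∈ bigBox d ℓ := deep_mem_box hdx
  have hybox : y ∈ bigBox d ℓ := deep_mem_box hdy
  -- step 1 : x is emptied in one step for the filled η
  have hcard1 : k ≤ ((neighbors x).filter
      (fun z => z ∈ bigBox d ℓ ∧ fillOutside (bigBox d ℓ) η z = false)).card := by
    have hsub : insert y ((neighbors x).filter (fun z => z ≠ y ∧ η z = false)) ⊆
        (neighbors x).filter
          (fun z => z ∈ bigBox d ℓ ∧ fillOutside (bigBox d ℓ) η z = false) := by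
      intro z hz
      rcases Finset.mem_insert.mp hz with rfl | hz'
      · exact Finset.mem_filter.mpr ⟨mem_neighbors_of_adj hxy, hybox,
          by rw [fill_mem hybox]; exact hy⟩
      · have hz'' := Finset.mem_filter.mp hz'
        have hzbox : z ∈ bigBox d ℓ :=
          neighbor_mem_box_of_deep hdx (adj_of_mem_neighbors hz''.1)
        exact Finset.mem_filter.mpr ⟨hz''.1, hzbox,
          by rw [fill_mem hzbox]; exact hz''.2.2⟩
    have hy_not : y ∉ (neighbors x).filter (fun z => z ≠ y ∧ η z = false) := by
      simp [Finset.mem_filter]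
    have hcardin := Finset.card_le_card hsub
    rw [Finset.card_insert_of_notMem hy_not] at hcardin
    have := hcon.1
    omega
  have hstep1 : BPstep k ℓ (fillOutside (bigBox d ℓ) η) x = false := by
    unfold BPstep
    rw [if_pos hxbox, if_neg]
    rintro ⟨-, hlt⟩
    exact absurd hlt (not_lt.mpr hcard1)
  -- step 2 : y is emptied in one step for the filled swap
  have hcard2 : k ≤ ((neighbors y).filter
      (fun z => z ∈ bigBox d ℓ ∧ fillOutside (bigBox d ℓ) (swap η x y) z = false)).card := by
    have hsub : insert x ((neighbors y).filter (fun z => z ≠ x ∧ η z = false)) ⊆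
        (neighbors y).filter
          (fun z => z ∈ bigBox d ℓ ∧ fillOutside (bigBox d ℓ) (swap η x y) z = false) := by
      intro z hz
      rcases Finset.mem_insert.mp hz with rfl | hz'
      · refine Finset.mem_filter.mpr ⟨mem_neighbors_of_adj (adj_symm hxy), hxbox, ?_⟩
        rw [fill_mem hxbox]
        show (if z = z then η y else if z = y then η z else η z) = false
        rw [if_pos rfl]; exact hy
      · have hz'' := Finset.mem_filter.mp hz'
        have hzy : z ≠ y := (ne_of_adj (adj_of_mem_neighbors hz''.1)).symm
        have hzbox : z ∈ bigBox d ℓ :=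
          neighbor_mem_box_of_deep hdy (adj_of_mem_neighbors hz''.1)
        refine Finset.mem_filter.mpr ⟨hz''.1, hzbox, ?_⟩
        rw [fill_mem hzbox, swap_apply_ne hz''.2.1 hzy]
        exact hz''.2.2
    have hx_not : x ∉ (neighbors y).filter (fun z => z ≠ x ∧ η z = false) := by
      simp [Finset.mem_filter]
    have hcardin := Finset.card_le_card hsub
    rw [Finset.card_insert_of_notMem hx_not] at hcardin
    have := hcon.2
    omega
  have hstep2 : BPstep k ℓ (fillOutside (bigBox d ℓ) (swap η x y)) y = false := by
    unfold BPstep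
    rw [if_pos hybox, if_neg]
    rintro ⟨-, hlt⟩
    exact absurd hlt (not_lt.mpr hcard2)
  -- combine
  have h1 : BPinf k ℓ (Function.update (fillOutside (bigBox d ℓ) η) x false) =
      BPinf k ℓ (fillOutside (bigBox d ℓ) η) :=
    bpinf_update_false (T := 1) (by rw [Function.iterate_one]; exact hstep1)
  have h2 : BPinf k ℓ (Function.update (fillOutside (bigBox d ℓ) (swap η x y)) y false) =
      BPinf k ℓ (fillOutside (bigBox d ℓ) (swap η x y)) :=
    bpinf_update_false (T := 1) (by rw [Function.iterate_one]; exact hstep2)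
  have heq : Function.update (fillOutside (bigBox d ℓ) η) x false =
      Function.update (fillOutside (bigBox d ℓ) (swap η x y)) y false := by
    funext z
    by_cases hzx : z = x
    · subst hzx
      rw [Function.update_self, Function.update_of_ne hxyne, fill_mem hxbox]
      show false = (if z = z then η y else if z = y then η z else η z)
      rw [if_pos rfl, hy]
    · by_cases hzy : z = y
      · subst hzy
        rw [Function.update_of_ne (Ne.symm hxyne), Function.update_self,
          fill_mem hybox, hy]
      · rw [Function.update_of_ne hzx, Function.update_of_ne hzy]
        by_cases hzbox : z ∈ bigBox d ℓ
        · rw [fill_mem hzbox, fill_mem hzbox, swap_apply_ne hzx hzy]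
        · rw [fill_not_mem hzbox, fill_not_mem hzbox]
  rw [← h1, ← h2, heq]

end AuxSwap

section AuxDet

variable {d : ℕ}

lemma normbig_pair {ℓ : ℕ} {x y : Site d} (hxy : adj x y)
    (h : ∃ i, ¬(|x i| ≤ (ℓ : ℤ) - 1)) :
    (∃ i, (ℓ : ℤ) - 1 ≤ |x i|) ∧ (∃ i, (ℓ : ℤ) - 1 ≤ |y i|) := by
  obtain ⟨i, hi⟩ := h
  have h1 : (ℓ : ℤ) - 1 ≤ |x i| := le_of_lt (not_le.mp hi)
  refine ⟨⟨i, h1⟩, ⟨i, ?_⟩⟩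
  have h2 := abs_sub_le_of_adj hxy i
  have h3 : |x i| - |y i| ≤ |x i - y i| := abs_sub_abs_le_abs_sub _ _
  have h4 : (ℓ : ℤ) - 1 < |x i| := not_le.mp hi
  omega

lemma det_core {k ℓ : ℕ} {η : Config d} {x y : Site d}
    (hk : 2 ≤ k) (hxy : adj x y) (hcon : constraint k η x y)
    (hB : ¬ Bevent k ℓ (fillOutside (bigBox d ℓ) η))
    (hB' : ¬ Bevent k ℓ (fillOutside (bigBox d ℓ) (swap η x y))) :
    fTest d k ℓ (swap η x y) = fTest d k ℓ η := by
  by_cases hval : η x = η y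
  · rw [swap_self hval]
  by_cases hdeep : (∀ i, |x i| ≤ (ℓ : ℤ) - 1) ∧ (∀ i, |y i| ≤ (ℓ : ℤ) - 1)
  · have hBP : BPinf k ℓ (fillOutside (bigBox d ℓ) (swap η x y)) =
        BPinf k ℓ (fillOutside (bigBox d ℓ) η) := by
      by_cases hx1 : η x = true
      · have hy1 : η y = false := by
          cases hv : η y
          · rfl
          · exact absurd (by rw [hx1, hv]) hval
        exact bpinf_swap_deep hk hxy hdeep.1 hdeep.2 hx1 hy1 hcon
      · have hx0 : η x = false := by
          cases hv : η x
          · rfl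
          · exact absurd hv hx1
        have hy1 : η y = true := by
          cases hv : η y
          · exact absurd (by rw [hx0, hv]) hval
          · rfl
        have hsx : (swap η x y) x = true := by
          show (if x = x then η y else if x = y then η x else η x) = true
          rw [if_pos rfl]; exact hy1
        have hsy : (swap η x y) y = false := by
          show (if y = x then η y else if y = y then η x else η y) = false
          rw [if_neg (Ne.symm (ne_of_adj hxy)), if_pos rfl]; exact hx0
        have h1 := bpinf_swap_deep hk hxy hdeep.1 hdeep.2 hsx hsy
          (constraint_swap hxy hcon)
        rw [swap_swap (ne_of_adj hxy)] at h1
        exact h1.symm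
    unfold fTest bpRightmost
    rw [cluster_congr hBP]
  · have hnb : (∃ i, (ℓ : ℤ) - 1 ≤ |x i|) ∧ (∃ i, (ℓ : ℤ) - 1 ≤ |y i|) := by
      rcases not_and_or.mp hdeep with h | h
      · push_neg at h
        obtain ⟨i, hi⟩ := h
        exact normbig_pair hxy ⟨i, not_le.mpr hi⟩
      · push_neg at h
        obtain ⟨i, hi⟩ := h
        exact (normbig_pair (adj_symm hxy) ⟨i, not_le.mpr hi⟩).symm
    have hW : ∀ w, fillOutside (bigBox d ℓ) η w ≠ fillOutside (bigBox d ℓ) (swap η x y) w →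
        w = x ∨ w = y := by
      intro w hw
      by_contra hc
      push_neg at hc
      apply hw
      by_cases hwb : w ∈ bigBox d ℓ
      · rw [fill_mem hwb, fill_mem hwb, swap_apply_ne hc.1 hc.2]
      · rw [fill_not_mem hwb, fill_not_mem hwb]
    have hBig : ∀ w, w = x ∨ w = y → ∃ i, (ℓ : ℤ) - 1 ≤ |w i| := by
      rintro w (rfl | rfl)
      · exact hnb.1
      · exact hnb.2
    have hcl : bpCluster k ℓ (fillOutside (bigBox d ℓ) (swap η x y)) =
        bpCluster k ℓ (fillOutside (bigBox d ℓ) η) := by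
      apply Set.Subset.antisymm
      · intro z hz
        rcases cluster_or (ξ := fillOutside (bigBox d ℓ) η) hz with h | ⟨w, hwc, hne⟩
        · exact h
        · exfalso
          apply hB'
          obtain ⟨i, hi⟩ := hBig w (hW w hne)
          exact ⟨w, hwc, i, hi⟩
      · intro z hz
        rcases cluster_or (ξ := fillOutside (bigBox d ℓ) (swap η x y)) hz with h | ⟨w, hwc, hne⟩
        · exact h
        · exfalso
          apply hB
          obtain ⟨i, hi⟩ := hBig w (hW w hne.symm)
          exact ⟨w, hwc, i, hi⟩
    unfold fTest bpRightmost
    rw [hcl]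

lemma fTest_bounds {k ℓ : ℕ} (hd : 0 < d) (η : Config d) :
    0 ≤ fTest d k ℓ η ∧ fTest d k ℓ η ≤ (ℓ : ℝ) := by
  have h0mem : (0 : ℝ) ∈ (fun x : Site d => (coord0 x : ℝ)) ''
      bpCluster k ℓ (fillOutside (bigBox d ℓ) η) := by
    refine ⟨origin, Relation.ReflTransGen.refl, ?_⟩
    simp [coord0, origin]
  have hub : ∀ v ∈ (fun x : Site d => (coord0 x : ℝ)) ''
      bpCluster k ℓ (fillOutside (bigBox d ℓ) η), v ≤ (ℓ : ℝ) := by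
    rintro v ⟨x, hx, rfl⟩
    have hbox := cluster_subset_box hx ⟨0, hd⟩
    have h1 : x ⟨0, hd⟩ ≤ (ℓ : ℤ) := (abs_le.mp hbox).2
    show ((coord0 x : ℤ) : ℝ) ≤ (ℓ : ℝ)
    have h2 : (coord0 x : ℤ) ≤ (ℓ : ℤ) := by
      unfold coord0
      rw [dif_pos hd]
      exact h1
    exact_mod_cast h2
  constructor
  · exact le_csSup ⟨(ℓ : ℝ), fun v hv => hub v hv⟩ h0mem
  · exact csSup_le ⟨0, h0mem⟩ hub

end AuxDet

section AuxMeasure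

variable {d : ℕ}

/-- `A` is determined by the coordinates in `S`. -/
def Det (S : Finset (Site d)) (A : Set (Config d)) : Prop :=
  ∀ η η' : Config d, (∀ z ∈ S, η z = η' z) → (η ∈ A ↔ η' ∈ A)

def CylF (S : Finset (Site d)) (ζ : Config d) : Set (Config d) :=
  {η | ∀ x ∈ S, η x = ζ x}

def extS (S : Finset (Site d)) (g : {z // z ∈ S} → Bool) : Config d :=
  fun z => if h : z ∈ S then g ⟨z, h⟩ else true

lemma cyl_measurable (S : Finset (Site d)) (ζ : Config d) :
    MeasurableSet (CylF S ζ) := by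
  have : CylF S ζ = ⋂ x ∈ S, (fun η : Config d => η x) ⁻¹' {ζ x} := by
    ext η; simp [CylF]
  rw [this]
  exact MeasurableSet.biInter S.countable_toSet
    (fun x _ => measurable_pi_apply x (measurableSet_singleton (ζ x)))

lemma measure_cyl {q : ℝ} {μ : Measure (Config d)} (hμ : IsBernoulliProduct q μ)
    (S : Finset (Site d)) (ζ : Config d) :
    μ (CylF S ζ) = ∏ x ∈ S, ENNReal.ofReal (if ζ x then 1 - q else q) :=
  hμ.2 S ζ

/-- index set of patterns on `S` whose extension lies in `A`. -/
def pats (S : Finset (Site d)) (A : Set (Config d)) : Finset ({z // z ∈ S} → Bool) :=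
  Finset.univ.filter (fun g => extS S g ∈ A)

lemma det_decomp {S : Finset (Site d)} {A : Set (Config d)} (hA : Det S A) :
    A = ⋃ g ∈ pats S A, CylF S (extS S g) := by
  ext η
  constructor
  · intro hη
    have h2 : η ∈ CylF S (extS S (fun z : {z // z ∈ S} => η z.1)) := by
      intro x hx
      rw [extS, dif_pos hx]
    have h1 : (fun z : {z // z ∈ S} => η z.1) ∈ pats S A := by
      refine Finset.mem_filter.mpr ⟨Finset.mem_univ _, ?_⟩
      refine (hA η _ ?_).mp hη
      intro z hz
      rw [extS, dif_pos hz]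
    exact Set.mem_biUnion h1 h2
  · intro hη
    obtain ⟨g, hg, hmem⟩ := Set.mem_iUnion₂.mp hη
    have hg' := Finset.mem_filter.mp hg
    exact (hA η (extS S g) hmem).mpr hg'.2

lemma cyl_disjoint {S : Finset (Site d)} {A : Set (Config d)} :
    Set.PairwiseDisjoint (↑(pats S A)) (fun g => CylF S (extS S g)) := by
  intro g _ g' _ hgg'
  rw [Function.onFun, Set.disjoint_left]
  intro η h1 h2
  apply hgg'
  funext z
  have e1 := h1 z.1 z.2
  have e2 := h2 z.1 z.2
  rw [extS, dif_pos z.2] at e1 e2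
  rw [← e1, ← e2]

lemma det_measurable {S : Finset (Site d)} {A : Set (Config d)} (hA : Det S A) :
    MeasurableSet A := by
  rw [det_decomp hA]
  exact Finset.measurableSet_biUnion _ (fun g _ => cyl_measurable S _)

lemma measure_det {q : ℝ} {μ : Measure (Config d)} (hμ : IsBernoulliProduct q μ)
    {S : Finset (Site d)} {A : Set (Config d)} (hA : Det S A) :
    μ A = ∑ g ∈ pats S A, μ (CylF S (extS S g)) := by
  conv_lhs => rw [det_decomp hA]
  exact measure_biUnion_finset cyl_disjoint (fun g _ => cyl_measurable S _)

lemma meas_eval_true (w : Site d) : MeasurableSet {η : Config d | η w = true} := by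
  have : {η : Config d | η w = true} = (fun η : Config d => η w) ⁻¹' {true} := by
    ext η; simp
  rw [this]
  exact measurable_pi_apply w (measurableSet_singleton true)

lemma cyl_inter_true {S : Finset (Site d)} {ζ : Config d} {w : Site d} (hw : w ∉ S) :
    CylF S ζ ∩ {η : Config d | η w = true} =
      CylF (insert w S) (Function.update ζ w true) := by
  ext η
  simp only [CylF, Set.mem_inter_iff, Set.mem_setOf_eq, Finset.mem_insert]
  constructor
  · rintro ⟨h1, h2⟩ x hx
    rcases hx with rfl | hx
    · rw [Function.update_self]; exact h2
    · have hxw : x ≠ w := by intro hh; exact hw (hh ▸ hx)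
      rw [Function.update_of_ne hxw]
      exact h1 x hx
  · intro h
    constructor
    · intro x hx
      have hxw : x ≠ w := by intro hh; exact hw (hh ▸ hx)
      have := h x (Or.inr hx)
      rwa [Function.update_of_ne hxw] at this
    · have := h w (Or.inl rfl)
      rwa [Function.update_self] at this

lemma measure_cyl_inter_true {q : ℝ} {μ : Measure (Config d)} (hμ : IsBernoulliProduct q μ)
    {S : Finset (Site d)} (ζ : Config d) {w : Site d} (hw : w ∉ S) :
    μ (CylF S ζ ∩ {η : Config d | η w = true}) =
      ENNReal.ofReal (1 - q) * μ (CylF S ζ) := by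
  rw [cyl_inter_true hw, measure_cyl hμ, measure_cyl hμ, Finset.prod_insert hw]
  congr 1
  · rw [Function.update_self]
    simp
  · apply Finset.prod_congr rfl
    intro x hx
    have hxw : x ≠ w := by intro hh; exact hw (hh ▸ hx)
    rw [Function.update_of_ne hxw]

lemma measure_inter_true {q : ℝ} {μ : Measure (Config d)} (hμ : IsBernoulliProduct q μ)
    {S : Finset (Site d)} {A : Set (Config d)} (hA : Det S A) {w : Site d} (hw : w ∉ S) :
    μ (A ∩ {η : Config d | η w = true}) = ENNReal.ofReal (1 - q) * μ A := by
  have hdec : A ∩ {η : Config d | η w = true} =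
      ⋃ g ∈ pats S A, (CylF S (extS S g) ∩ {η : Config d | η w = true}) := by
    conv_lhs => rw [det_decomp hA]
    rw [Set.iUnion₂_inter]
  have hdisj : Set.PairwiseDisjoint (↑(pats S A))
      (fun g => CylF S (extS S g) ∩ {η : Config d | η w = true}) :=
    fun g hg g' hg' hne =>
      Disjoint.mono Set.inter_subset_left Set.inter_subset_left (cyl_disjoint hg hg' hne)
  have hmeas : ∀ g ∈ pats S A,
      MeasurableSet (CylF S (extS S g) ∩ {η : Config d | η w = true}) :=
    fun g _ => (cyl_measurable S _).inter (meas_eval_true w)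
  rw [hdec, measure_biUnion_finset hdisj hmeas]
  calc ∑ g ∈ pats S A, μ (CylF S (extS S g) ∩ {η : Config d | η w = true})
      = ∑ g ∈ pats S A, ENNReal.ofReal (1 - q) * μ (CylF S (extS S g)) :=
        Finset.sum_congr rfl (fun g _ => measure_cyl_inter_true hμ _ hw)
    _ = ENNReal.ofReal (1 - q) * ∑ g ∈ pats S A, μ (CylF S (extS S g)) := by
        rw [Finset.mul_sum]
    _ = ENNReal.ofReal (1 - q) * μ A := by rw [← measure_det hμ hA]

/-- the transposition of the two sites `x` and `y`. -/
def tr (x y : Site d) (z : Site d) : Site d := if z = x then y else if z = y then x else z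

lemma tr_tr (x y z : Site d) : tr x y (tr x y z) = z := by
  unfold tr
  by_cases h1 : z = x
  · rw [if_pos h1]
    by_cases h2 : y = x
    · rw [if_pos h2]; exact h2.trans h1.symm
    · rw [if_neg h2, if_pos rfl]; exact h1.symm
  · by_cases h2 : z = y
    · rw [if_neg h1, if_pos h2, if_pos rfl]; exact h2.symm
    · rw [if_neg h1, if_neg h2, if_neg h1, if_neg h2]

lemma tr_inj (x y : Site d) : Function.Injective (tr x y) := by
  intro a b h
  have := congrArg (tr x y) h
  rwa [tr_tr, tr_tr] at this

lemma swap_eq_tr (η : Config d) (x y : Site d) : swap η x y = fun z => η (tr x y z) := by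
  funext z
  unfold swap tr
  split_ifs <;> rfl

lemma swap_measurable (x y : Site d) :
    Measurable (fun η : Config d => swap η x y) := by
  apply measurable_pi_lambda
  intro z
  have : (fun η : Config d => swap η x y z) = fun η : Config d => η (tr x y z) := by
    funext η
    rw [swap_eq_tr]
  rw [this]
  exact measurable_pi_apply _

lemma preimage_cyl_swap (x y : Site d) (S : Finset (Site d)) (ζ : Config d) :
    (fun η : Config d => swap η x y) ⁻¹' CylF S ζ =
      CylF (S.image (tr x y)) (fun u => ζ (tr x y u)) := by
  ext η
  simp only [Set.mem_preimage, CylF, Set.mem_setOf_eq, Finset.mem_image]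
  constructor
  · rintro h u ⟨z, hz, rfl⟩
    rw [tr_tr]
    have := h z hz
    rwa [swap_eq_tr] at this
  · intro h z hz
    rw [swap_eq_tr]
    have := h (tr x y z) ⟨z, hz, rfl⟩
    rwa [tr_tr] at this

lemma measure_swap_preimage {q : ℝ} {μ : Measure (Config d)} (hμ : IsBernoulliProduct q μ)
    {S : Finset (Site d)} {A : Set (Config d)} (hA : Det S A) (x y : Site d) :
    μ ((fun η : Config d => swap η x y) ⁻¹' A) = μ A := by
  have hdec : (fun η : Config d => swap η x y) ⁻¹' A =
      ⋃ g ∈ pats S A, (fun η : Config d => swap η x y) ⁻¹' CylF S (extS S g) := by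
    conv_lhs => rw [det_decomp hA]
    rw [Set.preimage_iUnion₂]
  have hdisj : Set.PairwiseDisjoint (↑(pats S A))
      (fun g => (fun η : Config d => swap η x y) ⁻¹' CylF S (extS S g)) :=
    fun g hg g' hg' hne => Disjoint.preimage _ (cyl_disjoint hg hg' hne)
  have hmeas : ∀ g ∈ pats S A,
      MeasurableSet ((fun η : Config d => swap η x y) ⁻¹' CylF S (extS S g)) :=
    fun g _ => (swap_measurable x y) (cyl_measurable S _)
  rw [hdec, measure_biUnion_finset hdisj hmeas, measure_det hμ hA]
  apply Finset.sum_congr rfl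
  intro g _
  rw [preimage_cyl_swap, measure_cyl hμ, measure_cyl hμ,
    Finset.prod_image (fun a _ b _ h => tr_inj x y h)]
  apply Finset.prod_congr rfl
  intro z _
  rw [tr_tr]

end AuxMeasure

section AuxEvents

variable {d : ℕ}

def boxF (d ℓ : ℕ) : Finset (Site d) :=
  Fintype.piFinset (fun _ : Fin d => Finset.Icc (-(ℓ : ℤ)) (ℓ : ℤ))

lemma mem_boxF {ℓ : ℕ} {z : Site d} : z ∈ boxF d ℓ ↔ z ∈ bigBox d ℓ := by
  unfold boxF bigBox
  rw [Fintype.mem_piFinset]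
  constructor
  · intro h i
    have := h i
    rw [Finset.mem_Icc] at this
    rw [abs_le]
    exact this
  · intro h i
    rw [Finset.mem_Icc]
    exact abs_le.mp (h i)

def Btil (d k ℓ : ℕ) : Set (Config d) :=
  {η | Bevent k ℓ (fillOutside (bigBox d ℓ) η)}

lemma det_Btil (k ℓ : ℕ) : Det (boxF d ℓ) (Btil d k ℓ) := by
  intro η η' hagree
  have hfill : fillOutside (bigBox d ℓ) η = fillOutside (bigBox d ℓ) η' := by
    funext z
    by_cases hz : z ∈ bigBox d ℓ
    · rw [fill_mem hz, fill_mem hz]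
      exact hagree z (mem_boxF.mpr hz)
    · rw [fill_not_mem hz, fill_not_mem hz]
  show Bevent k ℓ _ ↔ Bevent k ℓ _
  rw [hfill]

lemma det_Btil_update (k ℓ : ℕ) (w : Site d) :
    Det ((boxF d ℓ).erase w) {η : Config d | Bevent k ℓ
      (fillOutside (bigBox d ℓ) (Function.update η w true))} := by
  intro η η' hagree
  have hfill : fillOutside (bigBox d ℓ) (Function.update η w true) =
      fillOutside (bigBox d ℓ) (Function.update η' w true) := by
    funext z
    by_cases hz : z ∈ bigBox d ℓ
    · rw [fill_mem hz, fill_mem hz]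
      by_cases hzw : z = w
      · subst hzw; rw [Function.update_self, Function.update_self]
      · rw [Function.update_of_ne hzw, Function.update_of_ne hzw]
        exact hagree z (Finset.mem_erase.mpr ⟨hzw, mem_boxF.mpr hz⟩)
    · rw [fill_not_mem hz, fill_not_mem hz]
  show Bevent k ℓ _ ↔ Bevent k ℓ _
  rw [hfill]

lemma cle_fill_update (ℓ : ℕ) (η : Config d) (w : Site d) :
    cle (fillOutside (bigBox d ℓ) η)
      (fillOutside (bigBox d ℓ) (Function.update η w true)) := by
  intro z h
  by_cases hz : z ∈ bigBox d ℓ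
  · rw [fill_mem hz] at h ⊢
    by_cases hzw : z = w
    · subst hzw; rw [Function.update_self]
    · rw [Function.update_of_ne hzw]; exact h
  · rw [fill_not_mem hz]

lemma update_subset_Btil (k ℓ : ℕ) (w : Site d) :
    {η : Config d | Bevent k ℓ (fillOutside (bigBox d ℓ) (Function.update η w true))} ⊆
      Btil d k ℓ :=
  fun η h => bevent_antitone (cle_fill_update ℓ η w) h

lemma det_inter_true {S : Finset (Site d)} {A : Set (Config d)} (hA : Det S A) (w : Site d) :
    Det (insert w S) (A ∩ {η : Config d | η w = true}) := by
  intro η η' hagree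
  have h1 := hA η η' (fun z hz => hagree z (Finset.mem_insert_of_mem hz))
  have h2 := hagree w (Finset.mem_insert_self w S)
  constructor
  · rintro ⟨ha, hb⟩
    exact ⟨h1.mp ha, by rw [Set.mem_setOf_eq, ← h2]; exact hb⟩
  · rintro ⟨ha, hb⟩
    exact ⟨h1.mpr ha, by rw [Set.mem_setOf_eq, h2]; exact hb⟩

lemma key_bound1 {q : ℝ} {μ : Measure (Config d)} (hμ : IsBernoulliProduct q μ)
    {k ℓ : ℕ} {E : ℝ≥0∞} (hB : μ (Btil d k ℓ) ≤ E) (w : Site d) :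
    μ (Btil d k ℓ ∩ {η : Config d | η w = true}) ≤ ENNReal.ofReal (1 - q) * E := by
  have hset : Btil d k ℓ ∩ {η : Config d | η w = true} =
      {η : Config d | Bevent k ℓ (fillOutside (bigBox d ℓ) (Function.update η w true))} ∩
        {η : Config d | η w = true} := by
    ext η
    simp only [Set.mem_inter_iff, Set.mem_setOf_eq]
    constructor
    · rintro ⟨h1, h2⟩
      refine ⟨?_, h2⟩
      have : Function.update η w true = η := by
        funext z
        by_cases hz : z = w
        · subst hz; rw [Function.update_self, h2]
        · rw [Function.update_of_ne hz]
      rwa [this]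
    · rintro ⟨h1, h2⟩
      refine ⟨?_, h2⟩
      have : Function.update η w true = η := by
        funext z
        by_cases hz : z = w
        · subst hz; rw [Function.update_self, h2]
        · rw [Function.update_of_ne hz]
      rwa [this] at h1
  rw [hset, measure_inter_true hμ (det_Btil_update k ℓ w) (Finset.notMem_erase w _)]
  exact mul_le_mul_right (le_trans (measure_mono (update_subset_Btil k ℓ w)) hB) _

lemma key_bound2 {q : ℝ} {μ : Measure (Config d)} (hμ : IsBernoulliProduct q μ)
    {k ℓ : ℕ} {E : ℝ≥0∞} (hB : μ (Btil d k ℓ) ≤ E) (x y : Site d) :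
    μ ({η : Config d | η origin = true} ∩ ((fun η : Config d => swap η x y) ⁻¹' Btil d k ℓ))
      ≤ ENNReal.ofReal (1 - q) * E := by
  have hset : {η : Config d | η origin = true} ∩
      ((fun η : Config d => swap η x y) ⁻¹' Btil d k ℓ) =
      (fun η : Config d => swap η x y) ⁻¹'
        (Btil d k ℓ ∩ {η : Config d | η (tr x y origin) = true}) := by
    ext η
    simp only [Set.mem_inter_iff, Set.mem_setOf_eq, Set.mem_preimage]
    have hval : swap η x y (tr x y origin) = η origin := by
      rw [swap_eq_tr]
      show η (tr x y (tr x y origin)) = η origin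
      rw [tr_tr]
    rw [hval]
    exact and_comm
  rw [hset, measure_swap_preimage hμ (det_inter_true (det_Btil k ℓ) (tr x y origin)) x y]
  exact key_bound1 hμ hB (tr x y origin)

lemma measure_occ {q : ℝ} {μ : Measure (Config d)} (hμ : IsBernoulliProduct q μ) :
    μ {η : Config d | η origin = true} = ENNReal.ofReal (1 - q) := by
  have h := hμ.2 {origin} (fun _ => true)
  have hset : {η : Config d | ∀ x ∈ ({origin} : Finset (Site d)), η x = (fun _ => true) x} =
      {η : Config d | η origin = true} := by
    ext η; simp
  rw [hset] at h
  rw [h, Finset.prod_singleton, if_pos rfl]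

end AuxEvents

section AuxTerm

variable {d : ℕ}

lemma cval_le_one {k : ℕ} {η : Config d} {x y : Site d} : cval k η x y ≤ 1 := by
  unfold cval
  split_ifs
  · exact le_rfl
  · exact zero_le_one

lemma term_bound (hd : 0 < d) {k ℓ : ℕ} (hk : 2 ≤ k) {q : ℝ} (hq1 : q < 1)
    {μ : Measure (Config d)} (hμ : IsBernoulliProduct q μ) {E : ℝ≥0∞}
    (hB : μ (Btil d k ℓ) ≤ E) {x y : Site d} (hxy : adj x y) :
    ∫⁻ η, cval k η x y *
        ENNReal.ofReal ((fTest d k ℓ (swap η x y) - fTest d k ℓ η) ^ 2) ∂(condOcc μ) ≤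
      2 * ENNReal.ofReal ((ℓ : ℝ) ^ 2) * E := by
  set G := Btil d k ℓ ∪ (fun η : Config d => swap η x y) ⁻¹' Btil d k ℓ with hG
  have hGmeas : MeasurableSet G :=
    (det_measurable (det_Btil k ℓ)).union
      ((swap_measurable x y) (det_measurable (det_Btil k ℓ)))
  have hpt : ∀ η, cval k η x y *
      ENNReal.ofReal ((fTest d k ℓ (swap η x y) - fTest d k ℓ η) ^ 2) ≤
      G.indicator (fun _ => ENNReal.ofReal ((ℓ : ℝ) ^ 2)) η := by
    intro η
    by_cases hη : η ∈ G
    · rw [Set.indicator_of_mem hη]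
      have hsq : (fTest d k ℓ (swap η x y) - fTest d k ℓ η) ^ 2 ≤ (ℓ : ℝ) ^ 2 := by
        obtain ⟨ha1, ha2⟩ := fTest_bounds (k := k) (ℓ := ℓ) hd (swap η x y)
        obtain ⟨hb1, hb2⟩ := fTest_bounds (k := k) (ℓ := ℓ) hd η
        apply sq_le_sq' <;> linarith
      calc cval k η x y * ENNReal.ofReal ((fTest d k ℓ (swap η x y) - fTest d k ℓ η) ^ 2)
          ≤ 1 * ENNReal.ofReal ((ℓ : ℝ) ^ 2) :=
            mul_le_mul' cval_le_one (ENNReal.ofReal_le_ofReal hsq)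
        _ = ENNReal.ofReal ((ℓ : ℝ) ^ 2) := one_mul _
    · rw [Set.indicator_of_notMem hη]
      have h1 : ¬ Bevent k ℓ (fillOutside (bigBox d ℓ) η) := fun h => hη (Or.inl h)
      have h2 : ¬ Bevent k ℓ (fillOutside (bigBox d ℓ) (swap η x y)) := fun h => hη (Or.inr h)
      unfold cval
      split_ifs with hcon
      · rw [det_core hk hxy hcon h1 h2, sub_self]
        simp
      · simp
  have hq' : (0 : ℝ) < 1 - q := by linarith
  have hne : ENNReal.ofReal (1 - q) ≠ 0 := (ENNReal.ofReal_pos.mpr hq').ne'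
  have htop : ENNReal.ofReal (1 - q) ≠ ⊤ := ENNReal.ofReal_ne_top
  calc ∫⁻ η, cval k η x y *
        ENNReal.ofReal ((fTest d k ℓ (swap η x y) - fTest d k ℓ η) ^ 2) ∂(condOcc μ)
      ≤ ∫⁻ η, G.indicator (fun _ => ENNReal.ofReal ((ℓ : ℝ) ^ 2)) η ∂(condOcc μ) :=
        lintegral_mono hpt
    _ = ENNReal.ofReal ((ℓ : ℝ) ^ 2) * (condOcc μ) G := lintegral_indicator_const hGmeas _
    _ = ENNReal.ofReal ((ℓ : ℝ) ^ 2) *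
        ((μ {η : Config d | η origin = true})⁻¹ * μ ({η : Config d | η origin = true} ∩ G)) := by
        unfold condOcc
        rw [ProbabilityTheory.cond_apply (meas_eval_true origin) μ G]
    _ ≤ ENNReal.ofReal ((ℓ : ℝ) ^ 2) *
        ((ENNReal.ofReal (1 - q))⁻¹ *
          (ENNReal.ofReal (1 - q) * E + ENNReal.ofReal (1 - q) * E)) := by
        rw [measure_occ hμ]
        apply mul_le_mul_right
        apply mul_le_mul_right
        have hsplit : μ ({η : Config d | η origin = true} ∩ G) ≤
            μ ({η : Config d | η origin = true} ∩ Btil d k ℓ) +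
            μ ({η : Config d | η origin = true} ∩
              ((fun η : Config d => swap η x y) ⁻¹' Btil d k ℓ)) := by
          rw [hG, Set.inter_union_distrib_left]
          exact measure_union_le _ _
        refine le_trans hsplit (add_le_add ?_ ?_)
        · rw [Set.inter_comm]
          exact key_bound1 hμ hB origin
        · exact key_bound2 hμ hB x y
    _ = 2 * ENNReal.ofReal ((ℓ : ℝ) ^ 2) * E := by
        have h1 : ENNReal.ofReal (1 - q) * E + ENNReal.ofReal (1 - q) * E =
            ENNReal.ofReal (1 - q) * (2 * E) := by ring
        rw [h1]
        have h2 : (ENNReal.ofReal (1 - q))⁻¹ * (ENNReal.ofReal (1 - q) * (2 * E)) =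
            ((ENNReal.ofReal (1 - q))⁻¹ * ENNReal.ofReal (1 - q)) * (2 * E) := by ring
        rw [h2, ENNReal.inv_mul_cancel hne htop, one_mul]
        ring

end AuxTerm

section AuxCount

variable {d : ℕ}

def boxF' (d ℓ : ℕ) : Finset (Site d) :=
  Fintype.piFinset (fun _ : Fin d => Finset.Icc (-(ℓ : ℤ) - 1) ((ℓ : ℤ) + 1))

lemma mem_boxF' {ℓ : ℕ} {z : Site d} : z ∈ boxF' d ℓ ↔ ∀ i, |z i| ≤ (ℓ : ℤ) + 1 := by
  unfold boxF'
  rw [Fintype.mem_piFinset]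
  constructor
  · intro h i
    have := Finset.mem_Icc.mp (h i)
    rw [abs_le]
    omega
  · intro h i
    rw [Finset.mem_Icc]
    have := abs_le.mp (h i)
    omega

lemma card_boxF' (hd : 0 < d) (ℓ : ℕ) : (boxF' d ℓ).card = (2 * ℓ + 3) ^ d := by
  unfold boxF'
  rw [Fintype.card_piFinset]
  have h : ∀ i : Fin d, (Finset.Icc (-(ℓ : ℤ) - 1) ((ℓ : ℤ) + 1)).card = 2 * ℓ + 3 := by
    intro i
    rw [Int.card_Icc]
    omega
  rw [Finset.prod_congr rfl (fun i _ => h i), Finset.prod_const, Finset.card_univ,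
    Fintype.card_fin]

end AuxCount

theorem statement17' (d : ℕ) (hd : 2 ≤ d) :
    ∃ C : ℝ, 0 < C ∧
      ∀ k ℓ : ℕ, 2 ≤ k → k ≤ d → ∀ q : ℝ, 0 < q → q < 1 →
        ∀ μ : Measure (Config d), IsBernoulliProduct q μ →
          ∀ γ : ℝ, 0 < γ →
            μ {η | Bevent k ℓ (fillOutside (bigBox d ℓ) η)} ≤
              ENNReal.ofReal (Real.exp (-γ * ℓ)) →
            (∑' p : Site d × Site d,
                if p.1 ≠ origin ∧ adj p.1 p.2 then
                  ∫⁻ η, cval k η p.1 p.2 *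
                      ENNReal.ofReal
                        ((fTest d k ℓ (swap η p.1 p.2) - fTest d k ℓ η) ^ 2)
                    ∂(condOcc μ)
                else 0) ≤
              ENNReal.ofReal (C * (ℓ : ℝ) ^ (d + 2) * Real.exp (-γ * ℓ)) := by
  have hd0 : 0 < d := lt_of_lt_of_le two_pos hd
  have hCpos : 0 < 4 * d * 5 ^ d :=
    Nat.mul_pos (Nat.mul_pos (by norm_num) hd0) (Nat.pow_pos (n := d) (by norm_num))
  refine ⟨((4 * d * 5 ^ d : ℕ) : ℝ), by exact_mod_cast hCpos, ?_⟩
  intro k ℓ hk hkd q hq0 hq1 μ hμ γ hγ hBev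
  set E := ENNReal.ofReal (Real.exp (-γ * ℓ)) with hE
  have hB : μ (Btil d k ℓ) ≤ E := hBev
  set F : Site d × Site d → ℝ≥0∞ := fun p =>
    if p.1 ≠ origin ∧ adj p.1 p.2 then
      ∫⁻ η, cval k η p.1 p.2 *
        ENNReal.ofReal ((fTest d k ℓ (swap η p.1 p.2) - fTest d k ℓ η) ^ 2) ∂(condOcc μ)
    else 0 with hF
  set K : Finset (Site d × Site d) :=
    (boxF' d ℓ).biUnion (fun x => (neighbors x).image (fun y => (x, y))) with hK
  have hzero : ∀ p ∉ K, F p = 0 := by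
    rintro ⟨x, y⟩ hp
    by_cases hcond : x ≠ origin ∧ adj x y
    swap
    · rw [hF]; exact if_neg hcond
    rw [hF]
    simp only
    rw [if_pos hcond]
    -- both x and y are outside the box
    have hout : x ∉ bigBox d ℓ ∧ y ∉ bigBox d ℓ := by
      by_contra hc
      apply hp
      have hxin : ∀ i, |x i| ≤ (ℓ : ℤ) + 1 := by
        intro i
        rcases not_and_or.mp hc with h | h
        · push_neg at h
          have := h i
          omega
        · push_neg at h
          have h1 := h i
          have h2 := abs_sub_le_of_adj hcond.2 i
          have h3 : |x i| - |y i| ≤ |x i - y i| := abs_sub_abs_le_abs_sub _ _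
          omega
      rw [hK]
      refine Finset.mem_biUnion.mpr ⟨x, mem_boxF'.mpr hxin, ?_⟩
      exact Finset.mem_image.mpr ⟨y, mem_neighbors_of_adj hcond.2, rfl⟩
    have hfeq : ∀ η : Config d, fTest d k ℓ (swap η x y) = fTest d k ℓ η := by
      intro η
      unfold fTest
      rw [fill_swap_outside hout.1 hout.2]
    have hzero' : (fun η : Config d => cval k η x y *
        ENNReal.ofReal ((fTest d k ℓ (swap η x y) - fTest d k ℓ η) ^ 2)) =
        fun _ => 0 := by
      funext η
      rw [hfeq η, sub_self]
      norm_num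
    rw [hzero', lintegral_zero]
  have hbound : ∀ p ∈ K, F p ≤ 2 * ENNReal.ofReal ((ℓ : ℝ) ^ 2) * E := by
    intro p _
    rw [hF]
    simp only
    split_ifs with hcond
    · exact term_bound hd0 hk hq1 hμ hB hcond.2
    · exact zero_le
  have hcard : K.card ≤ 2 * d * (2 * ℓ + 3) ^ d := by
    calc K.card ≤ ∑ x ∈ boxF' d ℓ, ((neighbors x).image (fun y => (x, y))).card :=
          Finset.card_biUnion_le
      _ ≤ ∑ x ∈ boxF' d ℓ, 2 * d :=
          Finset.sum_le_sum (fun x _ => le_trans Finset.card_image_le (card_neighbors_le x))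
      _ = (2 * ℓ + 3) ^ d * (2 * d) := by
          rw [Finset.sum_const, card_boxF' hd0, smul_eq_mul]
      _ = 2 * d * (2 * ℓ + 3) ^ d := by ring
  calc (∑' p : Site d × Site d, F p) = ∑ p ∈ K, F p := tsum_eq_sum hzero
    _ ≤ ∑ p ∈ K, 2 * ENNReal.ofReal ((ℓ : ℝ) ^ 2) * E :=
        Finset.sum_le_sum hbound
    _ = (K.card : ℝ≥0∞) * (2 * ENNReal.ofReal ((ℓ : ℝ) ^ 2) * E) := by
        rw [Finset.sum_const, nsmul_eq_mul]
    _ ≤ ((2 * d * (2 * ℓ + 3) ^ d : ℕ) : ℝ≥0∞) *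
        (2 * ENNReal.ofReal ((ℓ : ℝ) ^ 2) * E) := by
        apply mul_le_mul_left
        exact_mod_cast hcard
    _ ≤ ENNReal.ofReal (((4 * d * 5 ^ d : ℕ) : ℝ) * (ℓ : ℝ) ^ (d + 2) * Real.exp (-γ * ℓ)) := by
        rw [hE]
        have hexp : (0 : ℝ) ≤ Real.exp (-γ * ℓ) := (Real.exp_pos _).le
        have hl2 : (0 : ℝ) ≤ (ℓ : ℝ) ^ 2 := sq_nonneg _
        have hrw : ((2 * d * (2 * ℓ + 3) ^ d : ℕ) : ℝ≥0∞) *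
            (2 * ENNReal.ofReal ((ℓ : ℝ) ^ 2) * ENNReal.ofReal (Real.exp (-γ * ℓ))) =
            ENNReal.ofReal (((2 * d * (2 * ℓ + 3) ^ d : ℕ) : ℝ) *
              (2 * (ℓ : ℝ) ^ 2 * Real.exp (-γ * ℓ))) := by
          rw [ENNReal.ofReal_mul (by positivity : (0:ℝ) ≤ ((2 * d * (2 * ℓ + 3) ^ d : ℕ) : ℝ)),
            ENNReal.ofReal_mul (by positivity : (0:ℝ) ≤ 2 * (ℓ : ℝ) ^ 2),
            ENNReal.ofReal_mul (by norm_num : (0:ℝ) ≤ 2),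
            ENNReal.ofReal_natCast, ENNReal.ofReal_ofNat]
        rw [hrw]
        apply ENNReal.ofReal_le_ofReal
        have hnat : 2 * d * (2 * ℓ + 3) ^ d * (2 * ℓ ^ 2) ≤ 4 * d * 5 ^ d * ℓ ^ (d + 2) := by
          have h1 : (2 * ℓ + 3) ^ d * ℓ ^ 2 ≤ 5 ^ d * ℓ ^ (d + 2) := by
            rcases Nat.eq_zero_or_pos ℓ with rfl | hl
            · simp
            · calc (2 * ℓ + 3) ^ d * ℓ ^ 2 ≤ (5 * ℓ) ^ d * ℓ ^ 2 :=
                    Nat.mul_le_mul_right _ (Nat.pow_le_pow_left (by omega) d)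
                _ = 5 ^ d * ℓ ^ (d + 2) := by rw [mul_pow, pow_add]; ring
          calc 2 * d * (2 * ℓ + 3) ^ d * (2 * ℓ ^ 2) =
                4 * d * ((2 * ℓ + 3) ^ d * ℓ ^ 2) := by ring
            _ ≤ 4 * d * (5 ^ d * ℓ ^ (d + 2)) := Nat.mul_le_mul_left _ h1
            _ = 4 * d * 5 ^ d * ℓ ^ (d + 2) := by ring
        have hnatR : ((2 * d * (2 * ℓ + 3) ^ d : ℕ) : ℝ) * (2 * (ℓ : ℝ) ^ 2) ≤
            ((4 * d * 5 ^ d : ℕ) : ℝ) * (ℓ : ℝ) ^ (d + 2) := by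
          exact_mod_cast hnat
        calc ((2 * d * (2 * ℓ + 3) ^ d : ℕ) : ℝ) * (2 * (ℓ : ℝ) ^ 2 * Real.exp (-γ * ℓ)) =
              (((2 * d * (2 * ℓ + 3) ^ d : ℕ) : ℝ) * (2 * (ℓ : ℝ) ^ 2)) *
                Real.exp (-γ * ℓ) := by ring
          _ ≤ (((4 * d * 5 ^ d : ℕ) : ℝ) * (ℓ : ℝ) ^ (d + 2)) * Real.exp (-γ * ℓ) :=
              mul_le_mul_of_nonneg_right hnatR hexp
          _ = ((4 * d * 5 ^ d : ℕ) : ℝ) * (ℓ : ℝ) ^ (d + 2) * Real.exp (-γ * ℓ) := by ring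


/-- If `μ(B) ≤ e^{-γℓ}` then the environment part of the
Dirichlet form of the test function is at most `C ℓ^{d+2} e^{-γℓ}`. -/
theorem statement17 (d : ℕ) (hd : 2 ≤ d) :
    ∃ C : ℝ, 0 < C ∧
      ∀ k ℓ : ℕ, 2 ≤ k → k ≤ d → ∀ q : ℝ, 0 < q → q < 1 →
        ∀ μ : Measure (Config d), IsBernoulliProduct q μ →
          ∀ γ : ℝ, 0 < γ →
            μ {η | Bevent k ℓ (fillOutside (bigBox d ℓ) η)} ≤
              ENNReal.ofReal (Real.exp (-γ * ℓ)) →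
            (∑' p : Site d × Site d,
                if p.1 ≠ origin ∧ adj p.1 p.2 then
                  ∫⁻ η, cval k η p.1 p.2 *
                      ENNReal.ofReal
                        ((fTest d k ℓ (swap η p.1 p.2) - fTest d k ℓ η) ^ 2)
                    ∂(condOcc μ)
                else 0) ≤
              ENNReal.ofReal (C * (ℓ : ℝ) ^ (d + 2) * Real.exp (-γ * ℓ)) :=
  statement17' d hd

end KA
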